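/- Let μ be a probability measure on a measurable space X and let P = {P₁, …, Pₙ} be a finite measurable partition of X. Let ε > 0 and choose δ > 0 with 3n³δ < ε. Suppose S is a sub-algebra of measurable sets and ψ : P → S is a map with μ(Pᵢ Δ ψ(Pᵢ)) < δ for all i. Define φ(Pᵢ) = ψ(Pᵢ) \ ⋃_{j<i} ψ(Pⱼ) for i < n and φ(Pₙ) = X \ ⋃_{i<n} ψ(Pᵢ). Then {φ(P₁), …, φ(Pₙ)} is a partition of X into sets in S, and extending φ additively to the algebra generated by P, we have μ(φ(Q) Δ Q) < ε for every Q in the algebra generated by P. -/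

import Mathlib

open MeasureTheory Set

theorem stmt7 {X : Type*} [MeasurableSpace X] (μ : Measure X) [IsProbabilityMeasure μ]
    (n : ℕ) (P : Fin (n + 1) → Set X)
    (hPmeas : ∀ i, MeasurableSet (P i))
    (hPdisj : Pairwise fun i j => Disjoint (P i) (P j))
    (hPcover : (⋃ i, P i) = Set.univ)
    (S : Set (Set X))
    (hSmeas : ∀ s ∈ S, MeasurableSet s)
    (hSuniv : Set.univ ∈ S)
    (hScompl : ∀ s ∈ S, sᶜ ∈ S)
    (hSunion : ∀ s ∈ S, ∀ t ∈ S, s ∪ t ∈ S)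
    (ε δ : ℝ) (hε : 0 < ε) (hδ : 0 < δ)
    (hδε : 3 * ((n + 1 : ℕ) : ℝ) ^ 3 * δ < ε)
    (ψ : Fin (n + 1) → Set X) (hψS : ∀ i, ψ i ∈ S)
    (hψclose : ∀ i, (μ (symmDiff (P i) (ψ i))).toReal < δ)
    (φ : Fin (n + 1) → Set X)
    (hφ : ∀ i : Fin (n + 1), i ≠ Fin.last n →
      φ i = ψ i \ ⋃ j ∈ {j : Fin (n + 1) | j < i}, ψ j)
    (hφlast : φ (Fin.last n) =
      Set.univ \ ⋃ j ∈ {j : Fin (n + 1) | j ≠ Fin.last n}, ψ j) :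
    (∀ i, φ i ∈ S) ∧
    (Pairwise fun i j => Disjoint (φ i) (φ j)) ∧
    ((⋃ i, φ i) = Set.univ) ∧
    (∀ I : Set (Fin (n + 1)),
      (μ (symmDiff (⋃ i ∈ I, φ i) (⋃ i ∈ I, P i))).toReal < ε) := by
  classical
  -- basic closure properties of S
  have hSempty : (∅ : Set X) ∈ S := by
    have := hScompl _ hSuniv
    simpa using this
  have hSinter : ∀ s ∈ S, ∀ t ∈ S, s ∩ t ∈ S := by
    intro s hs t ht
    have : s ∩ t = (sᶜ ∪ tᶜ)ᶜ := by simp [Set.compl_union]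
    rw [this]
    exact hScompl _ (hSunion _ (hScompl _ hs) _ (hScompl _ ht))
  have hfin : ∀ t : Finset (Fin (n + 1)), (⋃ j ∈ t, ψ j) ∈ S := by
    intro t
    induction t using Finset.induction with
    | empty => simpa using hSempty
    | insert _ _ h ih =>
      rw [Finset.set_biUnion_insert]
      exact hSunion _ (hψS _) _ ih
  have hSbiUnion : ∀ A : Set (Fin (n + 1)), (⋃ j ∈ A, ψ j) ∈ S := by
    intro A
    have : (⋃ j ∈ A, ψ j) = ⋃ j ∈ A.toFinset, ψ j := by
      ext x; simp
    rw [this]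
    exact hfin _
  -- Part 1
  have part1 : ∀ i, φ i ∈ S := by
    intro i
    by_cases hi : i = Fin.last n
    · subst hi
      rw [hφlast, Set.diff_eq, Set.univ_inter]
      exact hScompl _ (hSbiUnion _)
    · rw [hφ i hi, Set.diff_eq]
      exact hSinter _ (hψS i) _ (hScompl _ (hSbiUnion _))
  -- Part 2
  have key2 : ∀ i j, i ≠ Fin.last n → j ≠ Fin.last n → i < j → Disjoint (φ i) (φ j) := by
    intro i j hi hj hij
    rw [Set.disjoint_left]
    intro x hxi hxj
    rw [hφ i hi] at hxi
    rw [hφ j hj] at hxj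
    exact hxj.2 (Set.mem_biUnion (show i ∈ {k : Fin (n+1) | k < j} from hij) hxi.1)
  have key2' : ∀ i, i ≠ Fin.last n → Disjoint (φ i) (φ (Fin.last n)) := by
    intro i hi
    rw [Set.disjoint_left]
    intro x hxi hxl
    rw [hφ i hi] at hxi
    rw [hφlast] at hxl
    exact hxl.2 (Set.mem_biUnion (show i ∈ {k : Fin (n+1) | k ≠ Fin.last n} from hi) hxi.1)
  have part2 : Pairwise fun i j => Disjoint (φ i) (φ j) := by
    intro i j hij
    by_cases hi : i = Fin.last n
    · subst hi
      by_cases hj : j = Fin.last n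
      · exact absurd hj.symm hij
      · exact (key2' j hj).symm
    · by_cases hj : j = Fin.last n
      · subst hj
        exact key2' i hi
      · rcases hij.lt_or_gt with h | h
        · exact key2 i j hi hj h
        · exact (key2 j i hj hi h).symm
  -- Part 3
  have part3 : (⋃ i, φ i) = Set.univ := by
    rw [Set.iUnion_eq_univ_iff]
    intro x
    by_cases hx : ∃ j, j ≠ Fin.last n ∧ x ∈ ψ j
    · set s : Finset (Fin (n + 1)) :=
        Finset.univ.filter (fun j => j ≠ Fin.last n ∧ x ∈ ψ j) with hs_def
      have hs : s.Nonempty := by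
        obtain ⟨j, hj1, hj2⟩ := hx
        exact ⟨j, by simp [hs_def, hj1, hj2]⟩
      set j := s.min' hs with hj_def
      have hjmem : j ∈ s := s.min'_mem hs
      rw [hs_def, Finset.mem_filter] at hjmem
      refine ⟨j, ?_⟩
      rw [hφ j hjmem.2.1]
      refine ⟨hjmem.2.2, ?_⟩
      intro hmem
      rw [Set.mem_iUnion₂] at hmem
      obtain ⟨k, hk, hxk⟩ := hmem
      have hk' : k < j := hk
      have hklast : k ≠ Fin.last n := by
        intro h
        subst h
        exact absurd (Fin.le_last j) (not_le.mpr hk')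
      have hks : k ∈ s := by simp [hs_def, hklast, hxk]
      exact absurd (s.min'_le k hks) (not_le.mpr hk')
    · refine ⟨Fin.last n, ?_⟩
      rw [hφlast]
      refine ⟨trivial, ?_⟩
      intro hmem
      rw [Set.mem_iUnion₂] at hmem
      obtain ⟨k, hk, hxk⟩ := hmem
      exact hx ⟨k, hk, hxk⟩
  -- Part 4
  have hPx : ∀ (x : X) (i j : Fin (n + 1)), x ∈ P i → j ≠ i → x ∉ P j := by
    intro x i j hxi hji hxj
    exact Set.disjoint_left.mp (hPdisj hji) hxj hxi
  have hPex : ∀ x : X, ∃ i, x ∈ P i := by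
    intro x
    have : x ∈ ⋃ i, P i := hPcover ▸ Set.mem_univ x
    exact Set.mem_iUnion.mp this
  -- the key inclusion: φ i Δ P i ⊆ ⋃ j, ψ j Δ P j
  have hsub : ∀ i, symmDiff (φ i) (P i) ⊆ ⋃ j, symmDiff (ψ j) (P j) := by
    intro i x hx
    rw [Set.mem_symmDiff] at hx
    rw [Set.mem_iUnion]
    by_cases hi : i = Fin.last n
    · subst hi
      rw [hφlast] at hx
      rcases hx with ⟨⟨-, hxU⟩, hxP⟩ | ⟨hxP, hxφ⟩
      · obtain ⟨j, hxj⟩ := hPex x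
        have hj : j ≠ Fin.last n := by
          rintro rfl
          exact hxP hxj
        have hxψ : x ∉ ψ j := fun h => hxU (Set.mem_biUnion (show j ∈ {k : Fin (n+1) | k ≠ Fin.last n} from hj) h)
        exact ⟨j, Set.mem_symmDiff.mpr (Or.inr ⟨hxj, hxψ⟩)⟩
      · have hU : x ∈ ⋃ j ∈ {k : Fin (n+1) | k ≠ Fin.last n}, ψ j := by
          by_contra h
          exact hxφ ⟨trivial, h⟩
        rw [Set.mem_iUnion₂] at hU
        obtain ⟨j, hj, hxψ⟩ := hU
        have hxPj : x ∉ P j := hPx x (Fin.last n) j hxP hj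
        exact ⟨j, Set.mem_symmDiff.mpr (Or.inl ⟨hxψ, hxPj⟩)⟩
    · rw [hφ i hi] at hx
      rcases hx with ⟨⟨hxψ, -⟩, hxP⟩ | ⟨hxP, hxφ⟩
      · exact ⟨i, Set.mem_symmDiff.mpr (Or.inl ⟨hxψ, hxP⟩)⟩
      · by_cases hxψi : x ∈ ψ i
        · have hU : x ∈ ⋃ j ∈ {k : Fin (n+1) | k < i}, ψ j := by
            by_contra h
            exact hxφ ⟨hxψi, h⟩
          rw [Set.mem_iUnion₂] at hU
          obtain ⟨j, hj, hxψj⟩ := hU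
          have hji : j ≠ i := ne_of_lt hj
          have hxPj : x ∉ P j := hPx x i j hxP hji
          exact ⟨j, Set.mem_symmDiff.mpr (Or.inl ⟨hxψj, hxPj⟩)⟩
        · exact ⟨i, Set.mem_symmDiff.mpr (Or.inr ⟨hxP, hxψi⟩)⟩
  have part4 : ∀ I : Set (Fin (n + 1)),
      (μ (symmDiff (⋃ i ∈ I, φ i) (⋃ i ∈ I, P i))).toReal < ε := by
    intro I
    have hsub2 : symmDiff (⋃ i ∈ I, φ i) (⋃ i ∈ I, P i) ⊆ ⋃ j, symmDiff (ψ j) (P j) := by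
      intro x hx
      rw [Set.mem_symmDiff] at hx
      rcases hx with ⟨hx1, hx2⟩ | ⟨hx1, hx2⟩
      · rw [Set.mem_iUnion₂] at hx1
        obtain ⟨i, hiI, hxφ⟩ := hx1
        have hxP : x ∉ P i := fun h => hx2 (Set.mem_biUnion hiI h)
        exact hsub i (Set.mem_symmDiff.mpr (Or.inl ⟨hxφ, hxP⟩))
      · rw [Set.mem_iUnion₂] at hx1
        obtain ⟨i, hiI, hxP⟩ := hx1
        have hxφ : x ∉ φ i := fun h => hx2 (Set.mem_biUnion hiI h)
        exact hsub i (Set.mem_symmDiff.mpr (Or.inr ⟨hxP, hxφ⟩))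
    have hμj : ∀ j, μ (symmDiff (ψ j) (P j)) ≤ ENNReal.ofReal δ := by
      intro j
      rw [symmDiff_comm]
      rw [ENNReal.le_ofReal_iff_toReal_le (measure_ne_top μ _) hδ.le]
      exact (hψclose j).le
    have h1 : μ (symmDiff (⋃ i ∈ I, φ i) (⋃ i ∈ I, P i)) ≤
        ENNReal.ofReal (((n + 1 : ℕ) : ℝ) * δ) := by
      calc μ (symmDiff (⋃ i ∈ I, φ i) (⋃ i ∈ I, P i))
          ≤ μ (⋃ j, symmDiff (ψ j) (P j)) := measure_mono hsub2
        _ ≤ ∑' j, μ (symmDiff (ψ j) (P j)) := measure_iUnion_le _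
        _ = ∑ j, μ (symmDiff (ψ j) (P j)) := tsum_fintype _
        _ ≤ ∑ _j : Fin (n + 1), ENNReal.ofReal δ :=
            Finset.sum_le_sum (fun j _ => hμj j)
        _ = (n + 1 : ℕ) * ENNReal.ofReal δ := by
            simp [Finset.sum_const, nsmul_eq_mul]
        _ = ENNReal.ofReal (((n + 1 : ℕ) : ℝ) * δ) := by
            rw [ENNReal.ofReal_mul (by positivity)]
            push_cast
            rw [ENNReal.ofReal_add (by positivity) zero_le_one,
              ENNReal.ofReal_natCast, ENNReal.ofReal_one]
    have h2 : (μ (symmDiff (⋃ i ∈ I, φ i) (⋃ i ∈ I, P i))).toReal ≤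
        ((n + 1 : ℕ) : ℝ) * δ := by
      calc (μ (symmDiff (⋃ i ∈ I, φ i) (⋃ i ∈ I, P i))).toReal
          ≤ (ENNReal.ofReal (((n + 1 : ℕ) : ℝ) * δ)).toReal :=
            ENNReal.toReal_mono ENNReal.ofReal_ne_top h1
        _ = ((n + 1 : ℕ) : ℝ) * δ := ENNReal.toReal_ofReal (by positivity)
    have hn1 : (1 : ℝ) ≤ ((n + 1 : ℕ) : ℝ) := by exact_mod_cast Nat.one_le_iff_ne_zero.mpr (Nat.succ_ne_zero n)
    have hc : ((n + 1 : ℕ) : ℝ) ≤ 3 * ((n + 1 : ℕ) : ℝ) ^ 3 := by nlinarith [hn1, sq_nonneg (((n + 1 : ℕ) : ℝ)), sq_nonneg (((n + 1 : ℕ) : ℝ) - 1)]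
    have hcd := mul_le_mul_of_nonneg_right hc hδ.le
    linarith [h2]
  exact ⟨part1, part2, part3, part4⟩
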